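/- Affine chart of the noncommutative local projective plane (well-definedness of G_{01}): in the localization A := 𝔸^q⟨a_1^{-1}, a_3^{-1}⟩, the elements x := c_1 a_1^{-1}, y := b_1 a_1^{-1} and w := a_1 a_3 a_2 satisfy e_2 x e_2 = x, e_2 y e_2 = y, e_2 w e_2 = w (they are loops at the vertex 2), and they satisfy the noncommutative-ℂ³ relations with parameter q^{-3}: x y = q^{-3} y x, y w = q^{-3} w y, and w x = q^{-3} x w. Consequently the assignment x_1 ↦ c_1 a_1^{-1}, y_1 ↦ b_1 a_1^{-1}, w_1 ↦ a_1 a_3 a_2 defines a unital K-algebra homomorphism G_{01} from K⟨x_1, y_1, w_1⟩/(x_1y_1 − q^{-3}y_1x_1, y_1w_1 − q^{-3}w_1y_1, w_1x_1 − q^{-3}x_1w_1) to the corner algebra e_2 A e_2. -/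
import Mathlib


/-! Statement 12: affine chart of the noncommutative local projective plane. -/

/-- Generators of the quiver algebra `𝔸^q` localized at `a₁, a₃`:
three idempotents `e₁,e₂,e₃`, nine arrows, and the inverses `a₁⁻¹, a₃⁻¹`. -/
inductive QGen : Type
  | e1 | e2 | e3
  | a1 | a2 | a3 | b1 | b2 | b3 | c1 | c2 | c3
  | ia1 | ia3
deriving DecidableEq

open QGen

/-- Defining relations of `𝔸^q⟨a₁⁻¹, a₃⁻¹⟩` inside the free algebra. -/
inductive QRel (K : Type) [CommRing K] (q : Kˣ) :
    FreeAlgebra K QGen → FreeAlgebra K QGen → Prop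
  | sum : QRel K q (FreeAlgebra.ι K e1 + FreeAlgebra.ι K e2 + FreeAlgebra.ι K e3) 1
  | orth (u v : QGen) : u ≠ v → u ∈ [e1, e2, e3] → v ∈ [e1, e2, e3] →
      QRel K q (FreeAlgebra.ι K u * FreeAlgebra.ι K v) 0
  | idem (u : QGen) : u ∈ [e1, e2, e3] →
      QRel K q (FreeAlgebra.ι K u * FreeAlgebra.ι K u) (FreeAlgebra.ι K u)
  -- arrows `a₁,b₁,c₁ : 1 → 2`, `a₂,b₂,c₂ : 2 → 3`, `a₃,b₃,c₃ : 3 → 1`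
  | cor_a1 : QRel K q (FreeAlgebra.ι K a1)
      (FreeAlgebra.ι K e2 * FreeAlgebra.ι K a1 * FreeAlgebra.ι K e1)
  | cor_b1 : QRel K q (FreeAlgebra.ι K b1)
      (FreeAlgebra.ι K e2 * FreeAlgebra.ι K b1 * FreeAlgebra.ι K e1)
  | cor_c1 : QRel K q (FreeAlgebra.ι K c1)
      (FreeAlgebra.ι K e2 * FreeAlgebra.ι K c1 * FreeAlgebra.ι K e1)
  | cor_a2 : QRel K q (FreeAlgebra.ι K a2)
      (FreeAlgebra.ι K e3 * FreeAlgebra.ι K a2 * FreeAlgebra.ι K e2)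
  | cor_b2 : QRel K q (FreeAlgebra.ι K b2)
      (FreeAlgebra.ι K e3 * FreeAlgebra.ι K b2 * FreeAlgebra.ι K e2)
  | cor_c2 : QRel K q (FreeAlgebra.ι K c2)
      (FreeAlgebra.ι K e3 * FreeAlgebra.ι K c2 * FreeAlgebra.ι K e2)
  | cor_a3 : QRel K q (FreeAlgebra.ι K a3)
      (FreeAlgebra.ι K e1 * FreeAlgebra.ι K a3 * FreeAlgebra.ι K e3)
  | cor_b3 : QRel K q (FreeAlgebra.ι K b3)
      (FreeAlgebra.ι K e1 * FreeAlgebra.ι K b3 * FreeAlgebra.ι K e3)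
  | cor_c3 : QRel K q (FreeAlgebra.ι K c3)
      (FreeAlgebra.ι K e1 * FreeAlgebra.ι K c3 * FreeAlgebra.ι K e3)
  -- the nine superpotential relations
  | r1 : QRel K q (FreeAlgebra.ι K a3 * FreeAlgebra.ι K b2)
      ((q : K) • (FreeAlgebra.ι K b3 * FreeAlgebra.ι K a2))
  | r2 : QRel K q (FreeAlgebra.ι K a1 * FreeAlgebra.ι K b3)
      ((q : K) • (FreeAlgebra.ι K b1 * FreeAlgebra.ι K a3))
  | r3 : QRel K q (FreeAlgebra.ι K a2 * FreeAlgebra.ι K b1)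
      ((q : K) • (FreeAlgebra.ι K b2 * FreeAlgebra.ι K a1))
  | r4 : QRel K q (FreeAlgebra.ι K b2 * FreeAlgebra.ι K c1)
      ((q : K) • (FreeAlgebra.ι K c2 * FreeAlgebra.ι K b1))
  | r5 : QRel K q (FreeAlgebra.ι K b3 * FreeAlgebra.ι K c2)
      ((q : K) • (FreeAlgebra.ι K c3 * FreeAlgebra.ι K b2))
  | r6 : QRel K q (FreeAlgebra.ι K b1 * FreeAlgebra.ι K c3)
      ((q : K) • (FreeAlgebra.ι K c1 * FreeAlgebra.ι K b3))
  | r7 : QRel K q (FreeAlgebra.ι K c1 * FreeAlgebra.ι K a3)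
      ((q : K) • (FreeAlgebra.ι K a1 * FreeAlgebra.ι K c3))
  | r8 : QRel K q (FreeAlgebra.ι K c2 * FreeAlgebra.ι K a1)
      ((q : K) • (FreeAlgebra.ι K a2 * FreeAlgebra.ι K c1))
  | r9 : QRel K q (FreeAlgebra.ι K c3 * FreeAlgebra.ι K a2)
      ((q : K) • (FreeAlgebra.ι K a3 * FreeAlgebra.ι K c2))
  -- localization at a₁ (tail 1, head 2) and a₃ (tail 3, head 1)
  | inv_a1_left : QRel K q (FreeAlgebra.ι K ia1 * FreeAlgebra.ι K a1) (FreeAlgebra.ι K e1)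
  | inv_a1_right : QRel K q (FreeAlgebra.ι K a1 * FreeAlgebra.ι K ia1) (FreeAlgebra.ι K e2)
  | inv_a1_cor : QRel K q (FreeAlgebra.ι K ia1)
      (FreeAlgebra.ι K e1 * FreeAlgebra.ι K ia1 * FreeAlgebra.ι K e2)
  | inv_a3_left : QRel K q (FreeAlgebra.ι K ia3 * FreeAlgebra.ι K a3) (FreeAlgebra.ι K e3)
  | inv_a3_right : QRel K q (FreeAlgebra.ι K a3 * FreeAlgebra.ι K ia3) (FreeAlgebra.ι K e1)
  | inv_a3_cor : QRel K q (FreeAlgebra.ι K ia3)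
      (FreeAlgebra.ι K e3 * FreeAlgebra.ι K ia3 * FreeAlgebra.ι K e1)

/-- The localized quiver algebra `𝔸^q⟨a₁⁻¹, a₃⁻¹⟩`. -/
abbrev QAlg (K : Type) [CommRing K] (q : Kˣ) := RingQuot (QRel K q)

/-- The image of a generator in `𝔸^q⟨a₁⁻¹, a₃⁻¹⟩`. -/
def qel (K : Type) [CommRing K] (q : Kˣ) (x : QGen) : QAlg K q :=
  RingQuot.mkAlgHom K (QRel K q) (FreeAlgebra.ι K x)

/-- Generators of the noncommutative `ℂ³` algebra `K⟨x₁,y₁,w₁⟩`. -/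
inductive C3Gen : Type
  | x1 | y1 | w1
deriving DecidableEq

/-- Relations of the noncommutative `ℂ³` with parameter `q⁻³`:
`x₁y₁ = q⁻³ y₁x₁`, `y₁w₁ = q⁻³ w₁y₁`, `w₁x₁ = q⁻³ x₁w₁`. -/
inductive C3Rel (K : Type) [CommRing K] (q : Kˣ) :
    FreeAlgebra K C3Gen → FreeAlgebra K C3Gen → Prop
  | rxy : C3Rel K q (FreeAlgebra.ι K C3Gen.x1 * FreeAlgebra.ι K C3Gen.y1)
      ((((q⁻¹ : Kˣ) : K) ^ 3) • (FreeAlgebra.ι K C3Gen.y1 * FreeAlgebra.ι K C3Gen.x1))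
  | ryw : C3Rel K q (FreeAlgebra.ι K C3Gen.y1 * FreeAlgebra.ι K C3Gen.w1)
      ((((q⁻¹ : Kˣ) : K) ^ 3) • (FreeAlgebra.ι K C3Gen.w1 * FreeAlgebra.ι K C3Gen.y1))
  | rwx : C3Rel K q (FreeAlgebra.ι K C3Gen.w1 * FreeAlgebra.ι K C3Gen.x1)
      ((((q⁻¹ : Kˣ) : K) ^ 3) • (FreeAlgebra.ι K C3Gen.x1 * FreeAlgebra.ι K C3Gen.w1))

/-- The noncommutative `ℂ³` algebra with parameter `q⁻³`. -/
abbrev C3Alg (K : Type) [CommRing K] (q : Kˣ) := RingQuot (C3Rel K q)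

section Helpers

variable {K : Type} [CommRing K] {q : Kˣ}

private lemma qrel_eq {a b : FreeAlgebra K QGen} (h : QRel K q a b) :
    RingQuot.mkAlgHom K (QRel K q) a = RingQuot.mkAlgHom K (QRel K q) b :=
  RingQuot.mkAlgHom_rel _ h

private lemma qmul (u v : QGen) :
    qel K q u * qel K q v = RingQuot.mkAlgHom K (QRel K q)
      (FreeAlgebra.ι K u * FreeAlgebra.ι K v) := by
  simp [qel, map_mul]

-- idempotents
private lemma e1e1 : qel K q e1 * qel K q e1 = qel K q e1 := by
  rw [qmul]; exact qrel_eq (QRel.idem e1 (by simp))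

private lemma e2e2 : qel K q e2 * qel K q e2 = qel K q e2 := by
  rw [qmul]; exact qrel_eq (QRel.idem e2 (by simp))

private lemma e3e3 : qel K q e3 * qel K q e3 = qel K q e3 := by
  rw [qmul]; exact qrel_eq (QRel.idem e3 (by simp))

-- corner relations in A
private lemma corner (g h t : QGen)
    (hr : QRel K q (FreeAlgebra.ι K g)
      (FreeAlgebra.ι K h * FreeAlgebra.ι K g * FreeAlgebra.ι K t)) :
    qel K q g = qel K q h * qel K q g * qel K q t := by
  simpa only [qel, map_mul] using qrel_eq hr

private lemma absorb_right {g h t : QGen}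
    (hc : qel K q g = qel K q h * qel K q g * qel K q t)
    (ht : qel K q t * qel K q t = qel K q t) :
    qel K q g * qel K q t = qel K q g := by
  conv_lhs => rw [hc]
  rw [mul_assoc (qel K q h * qel K q g), ht, ← hc]

private lemma absorb_left {g h t : QGen}
    (hc : qel K q g = qel K q h * qel K q g * qel K q t)
    (hh : qel K q h * qel K q h = qel K q h) :
    qel K q h * qel K q g = qel K q g := by
  conv_lhs => rw [hc]
  rw [← mul_assoc, ← mul_assoc, hh, ← hc]

-- absorption
private lemma b1e1 : qel K q b1 * qel K q e1 = qel K q b1 :=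
  absorb_right (corner _ _ _ QRel.cor_b1) e1e1
private lemma e2b1 : qel K q e2 * qel K q b1 = qel K q b1 :=
  absorb_left (corner _ _ _ QRel.cor_b1) e2e2
private lemma c1e1 : qel K q c1 * qel K q e1 = qel K q c1 :=
  absorb_right (corner _ _ _ QRel.cor_c1) e1e1
private lemma e2c1 : qel K q e2 * qel K q c1 = qel K q c1 :=
  absorb_left (corner _ _ _ QRel.cor_c1) e2e2
private lemma a1e1 : qel K q a1 * qel K q e1 = qel K q a1 :=
  absorb_right (corner _ _ _ QRel.cor_a1) e1e1
private lemma e2a1 : qel K q e2 * qel K q a1 = qel K q a1 :=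
  absorb_left (corner _ _ _ QRel.cor_a1) e2e2
private lemma e1b3 : qel K q e1 * qel K q b3 = qel K q b3 :=
  absorb_left (corner _ _ _ QRel.cor_b3) e1e1
private lemma e1c3 : qel K q e1 * qel K q c3 = qel K q c3 :=
  absorb_left (corner _ _ _ QRel.cor_c3) e1e1
private lemma e1a3 : qel K q e1 * qel K q a3 = qel K q a3 :=
  absorb_left (corner _ _ _ QRel.cor_a3) e1e1
private lemma a2e2 : qel K q a2 * qel K q e2 = qel K q a2 :=
  absorb_right (corner _ _ _ QRel.cor_a2) e2e2
private lemma b2e2 : qel K q b2 * qel K q e2 = qel K q b2 :=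
  absorb_right (corner _ _ _ QRel.cor_b2) e2e2
private lemma c2e2 : qel K q c2 * qel K q e2 = qel K q c2 :=
  absorb_right (corner _ _ _ QRel.cor_c2) e2e2
private lemma ia1e2 : qel K q ia1 * qel K q e2 = qel K q ia1 :=
  absorb_right (corner _ _ _ QRel.inv_a1_cor) e2e2
private lemma e1ia1 : qel K q e1 * qel K q ia1 = qel K q ia1 :=
  absorb_left (corner _ _ _ QRel.inv_a1_cor) e1e1

-- inverses
private lemma ia1a1 : qel K q ia1 * qel K q a1 = qel K q e1 := by
  rw [qmul]; exact qrel_eq QRel.inv_a1_left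
private lemma a1ia1 : qel K q a1 * qel K q ia1 = qel K q e2 := by
  rw [qmul]; exact qrel_eq QRel.inv_a1_right
private lemma ia3a3 : qel K q ia3 * qel K q a3 = qel K q e3 := by
  rw [qmul]; exact qrel_eq QRel.inv_a3_left
private lemma a3ia3 : qel K q a3 * qel K q ia3 = qel K q e1 := by
  rw [qmul]; exact qrel_eq QRel.inv_a3_right

-- superpotential relations in A
private lemma qsmulrel {u v s t : QGen}
    (hr : QRel K q (FreeAlgebra.ι K u * FreeAlgebra.ι K v)
      ((q : K) • (FreeAlgebra.ι K s * FreeAlgebra.ι K t))) :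
    qel K q u * qel K q v = (q : K) • (qel K q s * qel K q t) := by
  simpa only [qel, map_mul, map_smul] using qrel_eq hr

private lemma R1 : qel K q a3 * qel K q b2 = (q:K) • (qel K q b3 * qel K q a2) := qsmulrel QRel.r1
private lemma R2 : qel K q a1 * qel K q b3 = (q:K) • (qel K q b1 * qel K q a3) := qsmulrel QRel.r2
private lemma R3 : qel K q a2 * qel K q b1 = (q:K) • (qel K q b2 * qel K q a1) := qsmulrel QRel.r3
private lemma R6 : qel K q b1 * qel K q c3 = (q:K) • (qel K q c1 * qel K q b3) := qsmulrel QRel.r6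
private lemma R7 : qel K q c1 * qel K q a3 = (q:K) • (qel K q a1 * qel K q c3) := qsmulrel QRel.r7
private lemma R8 : qel K q c2 * qel K q a1 = (q:K) • (qel K q a2 * qel K q c1) := qsmulrel QRel.r8
private lemma R9 : qel K q c3 * qel K q a2 = (q:K) • (qel K q a3 * qel K q c2) := qsmulrel QRel.r9

private lemma smul_cancel {A B : QAlg K q} (h : A = (q:K) • B) :
    B = ((q⁻¹ : Kˣ) : K) • A := by
  rw [h, smul_smul]
  simp

private lemma mul_rw {a b c z : QAlg K q} (h : a * b = c) :
    a * (b * z) = c * z := by rw [← mul_assoc, h]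

private lemma mul_rw_smul {a b u v z : QAlg K q} {r : K} (h : a * b = r • (u * v)) :
    a * (b * z) = r • (u * (v * z)) := by
  rw [← mul_assoc, h, smul_mul_assoc, mul_assoc]

private lemma S1 : qel K q ia1 * qel K q b1
    = ((q⁻¹ : Kˣ) : K) • (qel K q b3 * qel K q ia3) := by
  apply smul_cancel
  have h : qel K q ia1 * (qel K q a1 * (qel K q b3 * qel K q ia3))
      = qel K q ia1 * (((q:K) • (qel K q b1 * qel K q a3)) * qel K q ia3) := by
    rw [← mul_assoc (qel K q a1), R2]
  rw [mul_rw ia1a1, mul_rw e1b3] at h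
  rw [smul_mul_assoc, mul_smul_comm, mul_assoc (qel K q b1), a3ia3, b1e1] at h
  exact h

private lemma S2 : qel K q c1 * qel K q b3
    = ((q⁻¹ : Kˣ) : K) • (qel K q b1 * qel K q c3) := smul_cancel R6

private lemma S3 : qel K q c3 * qel K q ia3
    = ((q⁻¹ : Kˣ) : K) • (qel K q ia1 * qel K q c1) := by
  apply smul_cancel
  have h : qel K q ia1 * (qel K q c1 * (qel K q a3 * qel K q ia3))
      = qel K q ia1 * (((q:K) • (qel K q a1 * qel K q c3)) * qel K q ia3) := by
    rw [← mul_assoc (qel K q c1), R7]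
  rw [a3ia3, c1e1] at h
  rw [smul_mul_assoc, mul_smul_comm, mul_assoc (qel K q a1), ← mul_assoc (qel K q ia1),
    ia1a1, ← mul_assoc, e1c3] at h
  exact h

private lemma S4 : qel K q b1 * qel K q a3
    = ((q⁻¹ : Kˣ) : K) • (qel K q a1 * qel K q b3) := smul_cancel R2

private lemma S5 : qel K q b3 * qel K q a2
    = ((q⁻¹ : Kˣ) : K) • (qel K q a3 * qel K q b2) := smul_cancel R1

private lemma S6 : qel K q b2
    = ((q⁻¹ : Kˣ) : K) • (qel K q a2 * (qel K q b1 * qel K q ia1)) := by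
  apply smul_cancel
  have h : (qel K q a2 * qel K q b1) * qel K q ia1
      = ((q:K) • (qel K q b2 * qel K q a1)) * qel K q ia1 := by rw [R3]
  rw [mul_assoc] at h
  rw [smul_mul_assoc, mul_assoc, a1ia1, b2e2] at h
  exact h

private lemma S7 : qel K q a2 * qel K q c1
    = ((q⁻¹ : Kˣ) : K) • (qel K q c2 * qel K q a1) := smul_cancel R8

private lemma S8 : qel K q a3 * qel K q c2
    = ((q⁻¹ : Kˣ) : K) • (qel K q c3 * qel K q a2) := smul_cancel R9

private lemma S9 : qel K q a1 * qel K q c3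
    = ((q⁻¹ : Kˣ) : K) • (qel K q c1 * qel K q a3) := smul_cancel R7

private lemma cornerX : qel K q e2 * (qel K q c1 * qel K q ia1) * qel K q e2
    = qel K q c1 * qel K q ia1 := by
  rw [← mul_assoc, e2c1, mul_assoc, ia1e2]

private lemma cornerY : qel K q e2 * (qel K q b1 * qel K q ia1) * qel K q e2
    = qel K q b1 * qel K q ia1 := by
  rw [← mul_assoc, e2b1, mul_assoc, ia1e2]

private lemma cornerW : qel K q e2 * (qel K q a1 * qel K q a3 * qel K q a2) * qel K q e2
    = qel K q a1 * qel K q a3 * qel K q a2 := by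
  rw [← mul_assoc, ← mul_assoc, e2a1, mul_assoc (qel K q a1 * qel K q a3), a2e2]

private lemma Gxy : (qel K q c1 * qel K q ia1) * (qel K q b1 * qel K q ia1)
    = (((q⁻¹ : Kˣ) : K) ^ 3) •
      ((qel K q b1 * qel K q ia1) * (qel K q c1 * qel K q ia1)) := by
  rw [mul_assoc]
  rw [mul_rw_smul S1, mul_smul_comm, mul_rw_smul S2, mul_rw_smul S3, mul_smul_comm]
  simp only [smul_smul, mul_assoc]
  congr 1
  ring

private lemma Gyw : (qel K q b1 * qel K q ia1) * (qel K q a1 * qel K q a3 * qel K q a2)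
    = (((q⁻¹ : Kˣ) : K) ^ 3) •
      ((qel K q a1 * qel K q a3 * qel K q a2) * (qel K q b1 * qel K q ia1)) := by
  simp only [mul_assoc]
  rw [mul_rw ia1a1, mul_rw e1a3, mul_rw_smul S4, S5, mul_smul_comm, S6,
    mul_smul_comm, mul_smul_comm]
  simp only [smul_smul, mul_assoc]
  congr 1
  ring

private lemma Gwx : (qel K q a1 * qel K q a3 * qel K q a2) * (qel K q c1 * qel K q ia1)
    = (((q⁻¹ : Kˣ) : K) ^ 3) •
      ((qel K q c1 * qel K q ia1) * (qel K q a1 * qel K q a3 * qel K q a2)) := by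
  simp only [mul_assoc]
  rw [mul_rw ia1a1, mul_rw e1a3]
  rw [mul_rw_smul S7, a1ia1, c2e2, mul_smul_comm, mul_smul_comm, S8, mul_smul_comm,
    mul_rw_smul S9]
  simp only [smul_smul, mul_assoc]
  congr 1
  ring

private lemma e2X : qel K q e2 * (qel K q c1 * qel K q ia1) = qel K q c1 * qel K q ia1 := by
  rw [← mul_assoc, e2c1]
private lemma e2Y : qel K q e2 * (qel K q b1 * qel K q ia1) = qel K q b1 * qel K q ia1 := by
  rw [← mul_assoc, e2b1]
private lemma e2W : qel K q e2 * (qel K q a1 * qel K q a3 * qel K q a2)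
    = qel K q a1 * qel K q a3 * qel K q a2 := by
  rw [← mul_assoc, ← mul_assoc, e2a1]
private lemma Xe2 : (qel K q c1 * qel K q ia1) * qel K q e2 = qel K q c1 * qel K q ia1 := by
  rw [mul_assoc, ia1e2]
private lemma Ye2 : (qel K q b1 * qel K q ia1) * qel K q e2 = qel K q b1 * qel K q ia1 := by
  rw [mul_assoc, ia1e2]
private lemma We2 : (qel K q a1 * qel K q a3 * qel K q a2) * qel K q e2
    = qel K q a1 * qel K q a3 * qel K q a2 := by
  rw [mul_assoc, a2e2]

end Helpers

/-- The map on free generators. -/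
private def Fmap (K : Type) [CommRing K] (q : Kˣ) : FreeAlgebra K C3Gen →ₐ[K] QAlg K q :=
  FreeAlgebra.lift K fun g => match g with
    | C3Gen.x1 => qel K q c1 * qel K q ia1
    | C3Gen.y1 => qel K q b1 * qel K q ia1
    | C3Gen.w1 => qel K q a1 * qel K q a3 * qel K q a2

private lemma Fmap_rel {K : Type} [CommRing K] {q : Kˣ} :
    ∀ ⦃a b⦄, C3Rel K q a b → Fmap K q a = Fmap K q b := by
  intro a b h
  cases h <;> simp only [Fmap, map_mul, map_smul, FreeAlgebra.lift_ι_apply]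
  · exact Gxy
  · exact Gyw
  · exact Gwx

/-- The induced unital algebra map on the nc `ℂ³` algebra. -/
private def Flift (K : Type) [CommRing K] (q : Kˣ) : C3Alg K q →ₐ[K] QAlg K q :=
  RingQuot.liftAlgHom K ⟨Fmap K q, Fmap_rel⟩

private lemma Flift_comm {K : Type} [CommRing K] {q : Kˣ} (u : C3Alg K q) :
    Flift K q u * qel K q e2 = qel K q e2 * Flift K q u := by
  obtain ⟨z, rfl⟩ := RingQuot.mkAlgHom_surjective K (C3Rel K q) u
  induction z using FreeAlgebra.induction with
  | grade0 r =>
      simp only [AlgHom.commutes]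
      exact Algebra.commutes r _
  | grade1 g =>
      simp only [Flift, RingQuot.liftAlgHom_mkAlgHom_apply, Fmap, FreeAlgebra.lift_ι_apply]
      cases g
      · rw [Xe2, e2X]
      · rw [Ye2, e2Y]
      · rw [We2, e2W]
  | mul a b ha hb =>
      simp only [map_mul]
      rw [mul_assoc, hb, ← mul_assoc, ha, mul_assoc]
  | add a b ha hb =>
      simp only [map_add, add_mul, mul_add, ha, hb]

private lemma Flift_x {K : Type} [CommRing K] {q : Kˣ} :
    Flift K q (RingQuot.mkAlgHom K (C3Rel K q) (FreeAlgebra.ι K C3Gen.x1))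
      = qel K q c1 * qel K q ia1 := by
  simp [Flift, RingQuot.liftAlgHom_mkAlgHom_apply, Fmap, FreeAlgebra.lift_ι_apply]

private lemma Flift_y {K : Type} [CommRing K] {q : Kˣ} :
    Flift K q (RingQuot.mkAlgHom K (C3Rel K q) (FreeAlgebra.ι K C3Gen.y1))
      = qel K q b1 * qel K q ia1 := by
  simp [Flift, RingQuot.liftAlgHom_mkAlgHom_apply, Fmap, FreeAlgebra.lift_ι_apply]

private lemma Flift_w {K : Type} [CommRing K] {q : Kˣ} :
    Flift K q (RingQuot.mkAlgHom K (C3Rel K q) (FreeAlgebra.ι K C3Gen.w1))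
      = qel K q a1 * qel K q a3 * qel K q a2 := by
  simp [Flift, RingQuot.liftAlgHom_mkAlgHom_apply, Fmap, FreeAlgebra.lift_ι_apply]

private lemma key_corner {K : Type} [CommRing K] {q : Kˣ} (u : C3Alg K q) :
    qel K q e2 * Flift K q u * qel K q e2 = qel K q e2 * Flift K q u := by
  rw [mul_assoc, Flift_comm, ← mul_assoc, e2e2]

/-- In `A = 𝔸^q⟨a₁⁻¹, a₃⁻¹⟩`, the elements `x = c₁a₁⁻¹`, `y = b₁a₁⁻¹`,
`w = a₁a₃a₂` are loops at vertex 2 and satisfy the nc-`ℂ³` relations with parameter `q⁻³`;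
consequently `x₁ ↦ c₁a₁⁻¹`, `y₁ ↦ b₁a₁⁻¹`, `w₁ ↦ a₁a₃a₂` defines a unital `K`-algebra
homomorphism `G₀₁` from `K⟨x₁,y₁,w₁⟩/(x₁y₁−q⁻³y₁x₁, y₁w₁−q⁻³w₁y₁, w₁x₁−q⁻³x₁w₁)`
to the corner algebra `e₂ A e₂` (encoded as a non-unital algebra map into `A` sending `1` to
`e₂` and landing in the corner). -/
theorem nc_local_P2_affine_chart (K : Type) [CommRing K] (q : Kˣ) :
    (qel K q e2 * (qel K q c1 * qel K q ia1) * qel K q e2 = qel K q c1 * qel K q ia1)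
    ∧ (qel K q e2 * (qel K q b1 * qel K q ia1) * qel K q e2 = qel K q b1 * qel K q ia1)
    ∧ (qel K q e2 * (qel K q a1 * qel K q a3 * qel K q a2) * qel K q e2
        = qel K q a1 * qel K q a3 * qel K q a2)
    ∧ ((qel K q c1 * qel K q ia1) * (qel K q b1 * qel K q ia1)
        = (((q⁻¹ : Kˣ) : K) ^ 3) • ((qel K q b1 * qel K q ia1) * (qel K q c1 * qel K q ia1)))
    ∧ ((qel K q b1 * qel K q ia1) * (qel K q a1 * qel K q a3 * qel K q a2)
        = (((q⁻¹ : Kˣ) : K) ^ 3) •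
            ((qel K q a1 * qel K q a3 * qel K q a2) * (qel K q b1 * qel K q ia1)))
    ∧ ((qel K q a1 * qel K q a3 * qel K q a2) * (qel K q c1 * qel K q ia1)
        = (((q⁻¹ : Kˣ) : K) ^ 3) •
            ((qel K q c1 * qel K q ia1) * (qel K q a1 * qel K q a3 * qel K q a2)))
    ∧ (∃ G : C3Alg K q →ₙₐ[K] QAlg K q,
        G 1 = qel K q e2
        ∧ (∀ u : C3Alg K q, qel K q e2 * G u * qel K q e2 = G u)
        ∧ G (RingQuot.mkAlgHom K (C3Rel K q) (FreeAlgebra.ι K C3Gen.x1))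
            = qel K q c1 * qel K q ia1
        ∧ G (RingQuot.mkAlgHom K (C3Rel K q) (FreeAlgebra.ι K C3Gen.y1))
            = qel K q b1 * qel K q ia1
        ∧ G (RingQuot.mkAlgHom K (C3Rel K q) (FreeAlgebra.ι K C3Gen.w1))
            = qel K q a1 * qel K q a3 * qel K q a2) := by
  refine ⟨cornerX, cornerY, cornerW, Gxy, Gyw, Gwx, ?_⟩
  refine ⟨{ toFun := fun u => qel K q e2 * Flift K q u
            map_smul' := ?_
            map_zero' := ?_
            map_add' := ?_
            map_mul' := ?_ }, ?_, ?_, ?_, ?_, ?_⟩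
  · intro r u
    simp only [map_smul, mul_smul_comm, RingHom.id_apply, MonoidHom.id_apply]
  · simp only [map_zero, mul_zero]
  · intro u v
    simp only [map_add, mul_add]
  · intro u v
    show qel K q e2 * Flift K q (u * v)
      = (qel K q e2 * Flift K q u) * (qel K q e2 * Flift K q v)
    rw [map_mul, ← mul_assoc, ← mul_assoc, key_corner]
  · show qel K q e2 * Flift K q 1 = qel K q e2
    rw [map_one, mul_one]
  · intro u
    show qel K q e2 * (qel K q e2 * Flift K q u) * qel K q e2 = qel K q e2 * Flift K q u
    rw [← mul_assoc, e2e2, key_corner]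
  · show qel K q e2 * Flift K q _ = _
    rw [Flift_x, e2X]
  · show qel K q e2 * Flift K q _ = _
    rw [Flift_y, e2Y]
  · show qel K q e2 * Flift K q _ = _
    rw [Flift_w, e2W]
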